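/- arXiv:2311.00942 — 2 statements merged into one kernel-verified Lean document; each statement's English description precedes it below -/
import Mathlib

section
/- Let H be a real Hilbert space, M a closed subspace, r > 0, and x ∈ H with ‖x_M‖ > r. Then for every h ∈ H, the directional derivative of P_{B_M(r)} at x along h exists and equals P'_{B_M(r)}(x)(h) = (r/‖x_M‖)(h_M − (⟨x_M, h_M⟩/‖x_M‖²) x_M). In particular, P'_{B_M(r)}(x)(x) = 0. -/
open Filter Topology

/-- The metric projection onto the ball `B_M(r) = {y ∈ M : ‖y‖ ≤ r}` of the closed
subspace `M`, given by `y_M` when `‖y_M‖ ≤ r` and `(r/‖y_M‖) • y_M` otherwise. -/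
noncomputable def projSubBall {H : Type*} [NormedAddCommGroup H] [InnerProductSpace ℝ H]
    (M : Submodule ℝ H) [M.HasOrthogonalProjection] (r : ℝ) (y : H) : H :=
  if ‖(Submodule.orthogonalProjectionOnto M y : H)‖ ≤ r then (Submodule.orthogonalProjectionOnto M y : H)
  else (r / ‖(Submodule.orthogonalProjectionOnto M y : H)‖) • (Submodule.orthogonalProjectionOnto M y : H)

/-- Derivative of the norm at a nonzero point of a real inner product space. -/
lemma hasFDerivAt_norm' {H : Type*} [NormedAddCommGroup H] [InnerProductSpace ℝ H]
    {p : H} (hp : p ≠ 0) :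
    HasFDerivAt (fun y : H => ‖y‖) (‖p‖⁻¹ • innerSL ℝ p) p := by
  have hsq : HasFDerivAt (fun y : H => ‖y‖ ^ 2) (2 • innerSL ℝ p) p :=
    (hasFDerivAt_id p).norm_sq
  have hps : (0:ℝ) < ‖p‖ := norm_pos_iff.2 hp
  have hsqrt : HasDerivAt Real.sqrt (1 / (2 * Real.sqrt (‖p‖ ^ 2))) (‖p‖ ^ 2) :=
    Real.hasDerivAt_sqrt (by positivity)
  have := hsqrt.comp_hasFDerivAt p hsq
  have heq : (fun y : H => Real.sqrt (‖y‖ ^ 2)) = fun y : H => ‖y‖ := by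
    funext y; rw [Real.sqrt_sq (norm_nonneg y)]
  simp only [Function.comp_def] at this
  rw [heq] at this
  rw [Real.sqrt_sq hps.le] at this
  refine HasFDerivAt.congr_fderiv this ?_
  ext v
  simp only [ContinuousLinearMap.coe_smul', Pi.smul_apply, ContinuousLinearMap.smul_apply,
    smul_eq_mul]
  field_simp
  ring

/-- If `‖x_M‖ > r`, the directional derivative of the metric projection
onto `B_M(r)` at `x` along any `h` exists and equals
`(r/‖x_M‖)(h_M - (⟨x_M,h_M⟩/‖x_M‖²) x_M)`; in particular it vanishes along `h = x`. -/
theorem dirDeriv_projSubBall_outside {H : Type*} [NormedAddCommGroup H]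
    [InnerProductSpace ℝ H] [CompleteSpace H]
    (M : Submodule ℝ H) [M.HasOrthogonalProjection] (r : ℝ) (hr : 0 < r)
    (x : H) (hx : r < ‖(Submodule.orthogonalProjectionOnto M x : H)‖) :
    (∀ h : H, Tendsto (fun t : ℝ => t⁻¹ • (projSubBall M r (x + t • h) - projSubBall M r x))
      (𝓝[>] (0 : ℝ))
      (𝓝 ((r / ‖(Submodule.orthogonalProjectionOnto M x : H)‖) •
        ((Submodule.orthogonalProjectionOnto M h : H) -
          ((inner ℝ (Submodule.orthogonalProjectionOnto M x : H) (Submodule.orthogonalProjectionOnto M h : H) : ℝ) /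
            ‖(Submodule.orthogonalProjectionOnto M x : H)‖ ^ 2) • (Submodule.orthogonalProjectionOnto M x : H))))) ∧
    Tendsto (fun t : ℝ => t⁻¹ • (projSubBall M r (x + t • x) - projSubBall M r x))
      (𝓝[>] (0 : ℝ)) (𝓝 (0 : H)) := by
  set L : H →L[ℝ] H := M.subtypeL.comp (Submodule.orthogonalProjectionOnto M) with hLdef
  have hLx : L x = (Submodule.orthogonalProjectionOnto M x : H) := rfl
  set p : H := (Submodule.orthogonalProjectionOnto M x : H) with hpdef
  have hpn : (0:ℝ) < ‖p‖ := lt_trans hr hx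
  have hp0 : p ≠ 0 := norm_pos_iff.1 hpn
  -- the smooth extension of the projection outside the ball
  set f : H → H := fun y => (r / ‖L y‖) • L y with hfdef
  have h1 : HasFDerivAt (fun y : H => ‖L y‖) ((‖p‖⁻¹ • innerSL ℝ p).comp L) x := by
    exact (hasFDerivAt_norm' hp0).comp x L.hasFDerivAt
  have hne : ‖L x‖ ≠ 0 := by rw [hLx]; exact hpn.ne'
  have h2 : HasFDerivAt (fun y : H => (‖L y‖)⁻¹)
      ((-(‖L x‖ ^ 2)⁻¹) • ((‖p‖⁻¹ • innerSL ℝ p).comp L)) x :=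
    (hasDerivAt_inv hne).comp_hasFDerivAt x h1
  have h3 := (h2.const_mul r).smul L.hasFDerivAt
  set F' : H →L[ℝ] H :=
    (r * (‖L x‖)⁻¹) • (L : H →L[ℝ] H) +
      (r • ((-(‖L x‖ ^ 2)⁻¹) • ((‖p‖⁻¹ • innerSL ℝ p).comp L))).smulRight (L x) with hF'
  have hf' : HasFDerivAt f F' x := by
    have : f = fun y => (r * (‖L y‖)⁻¹) • L y := by
      funext y; simp only [hfdef, div_eq_mul_inv]
    rw [this]
    exact h3
  -- main claim for an arbitrary direction h
  have main : ∀ h : H, Tendsto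
      (fun t : ℝ => t⁻¹ • (projSubBall M r (x + t • h) - projSubBall M r x))
      (𝓝[>] (0 : ℝ))
      (𝓝 ((r / ‖p‖) •
        ((Submodule.orthogonalProjectionOnto M h : H) -
          ((inner ℝ p (Submodule.orthogonalProjectionOnto M h : H) : ℝ) / ‖p‖ ^ 2) • p))) := by
    intro h
    have hline : HasDerivAt (fun t : ℝ => f (x + t • h)) (F' h) 0 := hf'.hasLineDerivAt h
    have hT : Tendsto (fun t : ℝ => t⁻¹ • (f (x + t • h) - f x)) (𝓝[≠] (0:ℝ)) (𝓝 (F' h)) := by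
      have := hasDerivAt_iff_tendsto_slope.1 hline
      refine this.congr' ?_
      filter_upwards with t
      simp [slope_def_module]
    have hT' : Tendsto (fun t : ℝ => t⁻¹ • (f (x + t • h) - f x)) (𝓝[>] (0:ℝ)) (𝓝 (F' h)) :=
      hT.mono_left (nhdsWithin_mono 0 (fun t ht => ne_of_gt ht))
    have hproj : ∀ y : H, r < ‖L y‖ → projSubBall M r y = f y := by
      intro y hy
      have : ¬ ‖(Submodule.orthogonalProjectionOnto M y : H)‖ ≤ r := not_le.2 hy
      simp only [projSubBall, this, if_false]
      rfl
    have hev : ∀ᶠ t in 𝓝[>] (0:ℝ),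
        t⁻¹ • (projSubBall M r (x + t • h) - projSubBall M r x)
          = t⁻¹ • (f (x + t • h) - f x) := by
      have hcont : Continuous fun t : ℝ => ‖L (x + t • h)‖ := by fun_prop
      have hev0 : ∀ᶠ t in 𝓝 (0:ℝ), r < ‖L (x + t • h)‖ := by
        have h0 : r < ‖L (x + (0:ℝ) • h)‖ := by simpa [hLx] using hx
        exact (hcont.tendsto 0).eventually (eventually_gt_nhds h0)
      filter_upwards [nhdsWithin_le_nhds hev0] with t ht
      rw [hproj _ ht, hproj x (by rw [hLx]; exact hx)]
    have hfin := hT'.congr' (by filter_upwards [hev] with t ht using ht.symm)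
    have hLh : L h = (Submodule.orthogonalProjectionOnto M h : H) := rfl
    have hFh : F' h = (r / ‖p‖) • ((Submodule.orthogonalProjectionOnto M h : H) -
        ((inner ℝ p (Submodule.orthogonalProjectionOnto M h : H) : ℝ) / ‖p‖ ^ 2) • p) := by
      simp only [hF', ContinuousLinearMap.add_apply, ContinuousLinearMap.smul_apply,
        ContinuousLinearMap.smulRight_apply, ContinuousLinearMap.coe_comp', Function.comp_apply,
        ContinuousLinearMap.coe_smul', Pi.smul_apply, ContinuousLinearMap.neg_apply,
        innerSL_apply_apply, hLx, hLh, smul_eq_mul]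
      match_scalars
      · rw [div_eq_mul_inv]
      · field_simp
    rw [← hFh]
    exact hfin
  refine ⟨main, ?_⟩
  have := main x
  have hzero : (r / ‖p‖) •
      ((Submodule.orthogonalProjectionOnto M x : H) -
        ((inner ℝ p (Submodule.orthogonalProjectionOnto M x : H) : ℝ) / ‖p‖ ^ 2) • p) = 0 := by
    rw [← hpdef, real_inner_self_eq_norm_sq, div_self (by positivity), one_smul, sub_self,
      smul_zero]
  rwa [hzero] at this
end

section
/- Let H be a real Hilbert space, M a closed subspace, r > 0, and C_M(r) = {x ∈ H : ‖x_M‖ ≤ r}. For x with ‖x_M‖ > r and any h ∈ H, the directional derivative of the metric projection onto C_M(r) exists and equals P'_{C_M(r)}(x)(h) = (r/‖x_M‖)(h_M − (⟨x_M,h_M⟩/‖x_M‖²) x_M) + h_{M^⊥}, where h_{M^⊥} = h − h_M. In particular, P'_{C_M(r)}(x)(x) = x_{M^⊥}. -/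
open Filter Topology

/-- The metric projection onto the cylinder `C_M(r) = {y : ‖y_M‖ ≤ r}`, given by `y`
when `‖y_M‖ ≤ r` and `(r/‖y_M‖) • y_M + (y - y_M)` otherwise. -/
noncomputable def projCyl {H : Type*} [NormedAddCommGroup H] [InnerProductSpace ℝ H]
    (M : Submodule ℝ H) [M.HasOrthogonalProjection] (r : ℝ) (y : H) : H :=
  if ‖(M.orthogonalProjectionOnto y : H)‖ ≤ r then y
  else (r / ‖(M.orthogonalProjectionOnto y : H)‖) • (M.orthogonalProjectionOnto y : H) +
    (y - (M.orthogonalProjectionOnto y : H))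

open RealInnerProductSpace in
theorem aux_hasDerivAt_norm {H : Type*} [NormedAddCommGroup H] [InnerProductSpace ℝ H]
    (a b : H) (ha : a ≠ 0) :
    HasDerivAt (fun t : ℝ => ‖a + t • b‖) (⟪a, b⟫ / ‖a‖) 0 := by
  have hna : (0:ℝ) < ‖a‖ := norm_pos_iff.mpr ha
  have hg : HasDerivAt (fun t : ℝ => ‖a‖ ^ 2 + 2 * ⟪a, b⟫ * t + ‖b‖ ^ 2 * t ^ 2)
      (2 * ⟪a, b⟫) 0 := by
    have h1 : HasDerivAt (fun t : ℝ => ‖a‖ ^ 2 + 2 * ⟪a, b⟫ * t + ‖b‖ ^ 2 * t ^ 2)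
        (0 + 2 * ⟪a, b⟫ * 1 + ‖b‖ ^ 2 * (2 * 0 ^ 1)) 0 := by
      exact ((hasDerivAt_const (0:ℝ) (‖a‖^2)).add
        ((hasDerivAt_id (0:ℝ)).const_mul (2 * ⟪a, b⟫))).add
        (((hasDerivAt_pow 2 (0:ℝ))).const_mul (‖b‖^2))
    simpa using h1
  have hs : HasDerivAt (fun t : ℝ => Real.sqrt (‖a‖ ^ 2 + 2 * ⟪a, b⟫ * t + ‖b‖ ^ 2 * t ^ 2))
      (1 / (2 * Real.sqrt (‖a‖ ^ 2 + 2 * ⟪a, b⟫ * 0 + ‖b‖ ^ 2 * 0 ^ 2)) * (2 * ⟪a, b⟫)) 0 := by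
    apply (Real.hasDerivAt_sqrt ?_).comp 0 hg
    simp only [mul_zero, add_zero, ne_eq, zero_pow, two_ne_zero]
    positivity
  have heq : (fun t : ℝ => Real.sqrt (‖a‖ ^ 2 + 2 * ⟪a, b⟫ * t + ‖b‖ ^ 2 * t ^ 2)) =
      fun t : ℝ => ‖a + t • b‖ := by
    funext t
    rw [show ‖a‖ ^ 2 + 2 * ⟪a, b⟫ * t + ‖b‖ ^ 2 * t ^ 2 = ⟪a + t • b, a + t • b⟫ by
      simp only [inner_add_add_self, real_inner_smul_left, real_inner_smul_right,
        real_inner_self_eq_norm_sq, norm_smul, Real.norm_eq_abs]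
      rw [real_inner_comm b a]; rw [mul_pow, sq_abs]; ring]
    rw [real_inner_self_eq_norm_sq, Real.sqrt_sq (norm_nonneg _)]
  rw [heq] at hs
  convert hs using 1
  rw [show ‖a‖ ^ 2 + 2 * ⟪a, b⟫ * 0 + ‖b‖ ^ 2 * 0 ^ 2 = ‖a‖^2 by ring, Real.sqrt_sq hna.le]
  field_simp

open RealInnerProductSpace in
theorem aux_key_projCyl {H : Type*} [NormedAddCommGroup H]
    [InnerProductSpace ℝ H] [CompleteSpace H]
    (M : Submodule ℝ H) [M.HasOrthogonalProjection] (r : ℝ) (hr : 0 < r)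
    (x : H) (hx : r < ‖(M.orthogonalProjectionOnto x : H)‖) (h : H) :
    Tendsto (fun t : ℝ => t⁻¹ • (projCyl M r (x + t • h) - projCyl M r x))
      (𝓝[>] (0 : ℝ))
      (𝓝 ((r / ‖(M.orthogonalProjectionOnto x : H)‖) •
        ((M.orthogonalProjectionOnto h : H) -
          (⟪(M.orthogonalProjectionOnto x : H), (M.orthogonalProjectionOnto h : H)⟫ /
            ‖(M.orthogonalProjectionOnto x : H)‖ ^ 2) • (M.orthogonalProjectionOnto x : H)) +
        (h - (M.orthogonalProjectionOnto h : H)))) := by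
  set a : H := (M.orthogonalProjectionOnto x : H) with ha_def
  set b : H := (M.orthogonalProjectionOnto h : H) with hb_def
  have hna : (0:ℝ) < ‖a‖ := lt_trans hr hx
  have ha : a ≠ 0 := by intro h0; rw [h0] at hna; simp at hna
  set φ : ℝ → H := fun t => (r / ‖a + t • b‖) • (a + t • b) + ((x - a) + t • (h - b)) with hφ
  have hn : HasDerivAt (fun t : ℝ => ‖a + t • b‖) (⟪a, b⟫ / ‖a‖) 0 :=
    aux_hasDerivAt_norm a b ha
  have hc : HasDerivAt (fun t : ℝ => r / ‖a + t • b‖)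
      ((0 * ‖a + (0:ℝ) • b‖ - r * (⟪a, b⟫ / ‖a‖)) / ‖a + (0:ℝ) • b‖ ^ 2) 0 := by
    exact (hasDerivAt_const (0:ℝ) r).div hn (by simpa using hna.ne')
  have hv : HasDerivAt (fun t : ℝ => a + t • b) b 0 := by
    exact ((hasDerivAt_const (0:ℝ) a).add ((hasDerivAt_id (0:ℝ)).smul_const b)).congr_deriv (by simp)
  have hφ1 : HasDerivAt (fun t : ℝ => (r / ‖a + t • b‖) • (a + t • b))
      ((r / ‖a + (0:ℝ) • b‖) • b +
        ((0 * ‖a + (0:ℝ) • b‖ - r * (⟪a, b⟫ / ‖a‖)) / ‖a + (0:ℝ) • b‖ ^ 2) • (a + (0:ℝ) • b)) 0 :=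
    hc.smul hv
  have hφ2 : HasDerivAt (fun t : ℝ => (x - a) + t • (h - b)) (h - b) 0 := by
    exact ((hasDerivAt_const (0:ℝ) (x - a)).add ((hasDerivAt_id (0:ℝ)).smul_const (h - b))).congr_deriv (by simp)
  have hD : HasDerivAt φ
      ((r / ‖a‖) • (b - (⟪a, b⟫ / ‖a‖ ^ 2) • a) + (h - b)) 0 := by
    have := hφ1.add hφ2
    simp only [zero_smul, add_zero, zero_mul, zero_sub] at this
    convert this using 2
    · rfl
    rw [smul_sub, smul_smul, sub_eq_add_neg]
    congr 1
    rw [neg_div, neg_smul]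
    congr 2
    field_simp
  rw [hasDerivAt_iff_tendsto_slope] at hD
  have hsub : 𝓝[>] (0:ℝ) ≤ 𝓝[≠] (0:ℝ) :=
    nhdsWithin_mono 0 fun t ht => ne_of_gt ht
  have hD' := hD.mono_left hsub
  have hPcont : Continuous fun t : ℝ => ‖a + t • b‖ := by fun_prop
  have hev : ∀ᶠ t in 𝓝 (0:ℝ), r < ‖a + t • b‖ := by
    have := hPcont.continuousAt (x := (0:ℝ)) (Ioi_mem_nhds (by simpa using hx))
    exact this
  have hproj : ∀ t : ℝ, (M.orthogonalProjectionOnto (x + t • h) : H) = a + t • b := by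
    intro t; rw [ha_def, hb_def]; push_cast [map_add, map_smul]; ring
  have hP0 : projCyl M r x = φ 0 := by
    rw [projCyl, if_neg (not_le.mpr hx), hφ]; simp [ha_def]
  have heq : ∀ᶠ t in 𝓝[>] (0:ℝ),
      slope φ 0 t = t⁻¹ • (projCyl M r (x + t • h) - projCyl M r x) := by
    filter_upwards [hsub (self_mem_nhdsWithin), nhdsWithin_le_nhds hev] with t ht hrt
    have hpt : projCyl M r (x + t • h) = φ t := by
      rw [projCyl, hproj t, if_neg (not_le.mpr hrt), hφ]
      simp only
      congr 1
      rw [smul_sub]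
      abel
    rw [slope_def_module, hpt, hP0]
    simp
  exact (Tendsto.congr' heq hD')

/-- If `‖x_M‖ > r`, the directional derivative of the metric projection
onto the cylinder `C_M(r)` at `x` along any `h` exists and equals
`(r/‖x_M‖)(h_M - (⟨x_M,h_M⟩/‖x_M‖²) x_M) + h_{M⊥}`; in particular along `h = x`
it equals `x_{M⊥} = x - x_M`. -/
theorem dirDeriv_projCyl_outside {H : Type*} [NormedAddCommGroup H]
    [InnerProductSpace ℝ H] [CompleteSpace H]
    (M : Submodule ℝ H) [M.HasOrthogonalProjection] (r : ℝ) (hr : 0 < r)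
    (x : H) (hx : r < ‖(M.orthogonalProjectionOnto x : H)‖) :
    (∀ h : H, Tendsto (fun t : ℝ => t⁻¹ • (projCyl M r (x + t • h) - projCyl M r x))
      (𝓝[>] (0 : ℝ))
      (𝓝 ((r / ‖(M.orthogonalProjectionOnto x : H)‖) •
        ((M.orthogonalProjectionOnto h : H) -
          ((inner ℝ (M.orthogonalProjectionOnto x : H) (M.orthogonalProjectionOnto h : H) : ℝ) /
            ‖(M.orthogonalProjectionOnto x : H)‖ ^ 2) • (M.orthogonalProjectionOnto x : H)) +
        (h - (M.orthogonalProjectionOnto h : H))))) ∧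
    Tendsto (fun t : ℝ => t⁻¹ • (projCyl M r (x + t • x) - projCyl M r x))
      (𝓝[>] (0 : ℝ)) (𝓝 (x - (M.orthogonalProjectionOnto x : H))) := by
  have hna : (0:ℝ) < ‖(M.orthogonalProjectionOnto x : H)‖ := lt_trans hr hx
  refine ⟨fun h => aux_key_projCyl M r hr x hx h, ?_⟩
  have := aux_key_projCyl M r hr x hx x
  convert this using 2
  rw [real_inner_self_eq_norm_sq, div_self (by positivity), one_smul, sub_self, smul_zero,
    zero_add]
end
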